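/- Let R = Π Θ' = U Σ V' be the compact rank-K SVD of R (U'U = I_K, Σ invertible), where Π ∈ ℝ^{N×K} has rank K, Θ ∈ ℝ^{J×K} has rank K, and Π(I,:) = I_K for an index set I of size K. Then U = Π U(I,:), and in particular U(I,:) = Θ' V Σ⁻¹ is invertible. -/

import Mathlib

open Matrix

/-- for the compact SVD `R = Π Θᵀ = U Σ Vᵀ` with `Π(I,:) = I_K`,
one has `U = Π U(I,:)` and `U(I,:) = Θᵀ V Σ⁻¹` is invertible. -/
theorem svd_simplex_structure {N J K : ℕ}
    (Pm : Matrix (Fin N) (Fin K) ℝ) (Th : Matrix (Fin J) (Fin K) ℝ)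
    (hPrank : Pm.rank = K) (hTrank : Th.rank = K)
    (I : Fin K → Fin N) (hI : Function.Injective I)
    (hpure : Pm.submatrix I id = 1)
    (U : Matrix (Fin N) (Fin K) ℝ) (s : Fin K → ℝ)
    (V : Matrix (Fin J) (Fin K) ℝ)
    (hSVD : Pm * Thᵀ = U * Matrix.diagonal s * Vᵀ)
    (hU : Uᵀ * U = 1) (hV : Vᵀ * V = 1) (hs : ∀ k, 0 < s k) :
    U = Pm * U.submatrix I id ∧
    U.submatrix I id = Thᵀ * V * (Matrix.diagonal s)⁻¹ ∧
    IsUnit (U.submatrix I id) := by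
  have hdet : IsUnit (Matrix.diagonal s).det := by
    rw [det_diagonal]
    exact isUnit_iff_ne_zero.2 (Finset.prod_ne_zero_iff.2 fun k _ => (hs k).ne')
  have h1 : Pm * (Thᵀ * V * (Matrix.diagonal s)⁻¹) = U := by
    rw [← Matrix.mul_assoc, ← Matrix.mul_assoc, hSVD, Matrix.mul_assoc (U * Matrix.diagonal s), hV,
      Matrix.mul_one, Matrix.mul_assoc, mul_nonsing_inv _ hdet, Matrix.mul_one]
  have hsub : ∀ (B : Matrix (Fin K) (Fin K) ℝ),
      (Pm * B).submatrix I id = Pm.submatrix I id * B := by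
    intro B; ext i j; simp [mul_apply]
  have h2 : U.submatrix I id = Thᵀ * V * (Matrix.diagonal s)⁻¹ := by
    rw [← h1, hsub, hpure, one_mul]
  refine ⟨by rw [h2, h1], h2, ?_⟩
  have h3 : (Uᵀ * Pm) * U.submatrix I id = 1 := by
    rw [Matrix.mul_assoc, h2, h1, hU]
  exact (Matrix.isUnit_iff_isUnit_det _).2 (isUnit_det_of_left_inverse h3)
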